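/- Let A and B be nearly simple algebras over a field F, with unique non-trivial ideals I_A and I_B, and assume that every two-sided ideal of A ⊗ B is admissible. Then the algebra (A/I_A) ⊗ B has exactly one two-sided ideal other than {0} and (A/I_A) ⊗ B, namely (A/I_A) ⊗ I_B (the span of elementary tensors c ⊗ y with c ∈ A/I_A, y ∈ I_B); in particular (A/I_A) ⊗ B is nearly simple. Symmetrically, A ⊗ (B/I_B) is nearly simple with unique non-trivial ideal I_A ⊗ (B/I_B). -/

import Mathlib

open TensorProduct

/-- `A` is nearly simple with unique non-trivial two-sided ideal `I`. -/
def IsNearlySimpleWith {A : Type*} [Ring A] (I : TwoSidedIdeal A) : Prop :=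
  I ≠ ⊥ ∧ I ≠ ⊤ ∧
    (∀ J : TwoSidedIdeal A, J ≠ ⊥ → J ≠ ⊤ → J = I) ∧
    (∃ x ∈ I, ∃ y ∈ I, x * y ≠ 0)

/-- The `F`-subspace of `A ⊗[F] B` spanned by elementary tensors `x ⊗ y` with `x ∈ S`
and `y ∈ T`. -/
def tmulSpan (F : Type*) {A B : Type*} [Field F] [Ring A] [Algebra F A] [Ring B]
    [Algebra F B] (S : Set A) (T : Set B) : Submodule F (A ⊗[F] B) :=
  Submodule.span F {t : A ⊗[F] B | ∃ x ∈ S, ∃ y ∈ T, t = x ⊗ₜ[F] y}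

/-- A two-sided ideal of `A ⊗[F] B` is admissible if it is `{0}`, `A ⊗ B`, `I_A ⊗ I_B`,
`I_A ⊗ B`, `A ⊗ I_B`, or `I_A ⊗ B + A ⊗ I_B`. -/
def Admissible (F : Type*) {A B : Type*} [Field F] [Ring A] [Algebra F A] [Ring B]
    [Algebra F B] (IA : TwoSidedIdeal A) (IB : TwoSidedIdeal B)
    (J : TwoSidedIdeal (A ⊗[F] B)) : Prop :=
  J = ⊥ ∨ J = ⊤ ∨
  (J : Set (A ⊗[F] B)) = ↑(tmulSpan F (IA : Set A) (IB : Set B)) ∨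
  (J : Set (A ⊗[F] B)) = ↑(tmulSpan F (IA : Set A) (Set.univ : Set B)) ∨
  (J : Set (A ⊗[F] B)) = ↑(tmulSpan F (Set.univ : Set A) (IB : Set B)) ∨
  (J : Set (A ⊗[F] B)) =
    ↑(tmulSpan F (IA : Set A) (Set.univ : Set B) ⊔ tmulSpan F (Set.univ : Set A) (IB : Set B))

section Helpers

variable {F : Type*} [Field F]

lemma my_tmul_ne_zero {M N : Type*} [AddCommGroup M] [Module F M] [AddCommGroup N] [Module F N]
    {a : M} {b : N} (ha : a ≠ 0) (hb : b ≠ 0) : a ⊗ₜ[F] b ≠ (0 : M ⊗[F] N) := by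
  obtain ⟨φ, hφ⟩ : ∃ φ : Module.Dual F M, φ a ≠ 0 := by
    by_contra h; push_neg at h
    exact ha ((Module.forall_dual_apply_eq_zero_iff F a).mp h)
  intro h
  have h2 : φ a • b = 0 := by
    have := congrArg (fun z => (TensorProduct.lid F N) ((LinearMap.rTensor N φ) z)) h
    simpa using this
  rcases smul_eq_zero.mp h2 with h | h
  exacts [hφ h, hb h]

def tsiSubmodule (F : Type*) {A : Type*} [Field F] [Ring A] [Algebra F A]
    (I : TwoSidedIdeal A) : Submodule F A :=
  Submodule.restrictScalars F (TwoSidedIdeal.asIdeal I)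

lemma mem_tsiSubmodule {A : Type*} [Ring A] [Algebra F A] {I : TwoSidedIdeal A} {x : A} :
    x ∈ tsiSubmodule F I ↔ x ∈ I := by
  simp [tsiSubmodule]

lemma nontrivial_of_nearly {A : Type*} [Ring A] {I : TwoSidedIdeal A}
    (h : IsNearlySimpleWith I) : Nontrivial A := by
  by_contra hn
  rw [not_nontrivial_iff_subsingleton] at hn
  apply h.1
  apply SetLike.ext
  intro x
  rw [Subsingleton.elim x 0]
  simp [I.zero_mem]

lemma exists_mem_ne_zero {A : Type*} [Ring A] {I : TwoSidedIdeal A} (h : I ≠ ⊥) :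
    ∃ x ∈ I, x ≠ 0 := by
  by_contra hc
  push_neg at hc
  refine h (SetLike.ext fun x => ⟨fun hx => (TwoSidedIdeal.mem_bot _).mpr (hc x hx),
    fun hx => ?_⟩)
  rw [TwoSidedIdeal.mem_bot] at hx
  rw [hx]; exact I.zero_mem

lemma map_tmulSpan {A B A₂ B₂ : Type*} [Ring A] [Algebra F A] [Ring B] [Algebra F B]
    [Ring A₂] [Algebra F A₂] [Ring B₂] [Algebra F B₂]
    (f : A →ₐ[F] A₂) (g : B →ₐ[F] B₂) (S : Set A) (T : Set B) :
    Submodule.map (Algebra.TensorProduct.map f g).toLinearMap (tmulSpan F S T)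
      = tmulSpan F (f '' S) (g '' T) := by
  rw [tmulSpan, Submodule.map_span, tmulSpan]
  congr 1
  ext t
  constructor
  · rintro ⟨_, ⟨x, hx, y, hy, rfl⟩, rfl⟩
    exact ⟨f x, ⟨x, hx, rfl⟩, g y, ⟨y, hy, rfl⟩, by simp⟩
  · rintro ⟨_, ⟨x, hx, rfl⟩, _, ⟨y, hy, rfl⟩, rfl⟩
    exact ⟨x ⊗ₜ y, ⟨x, hx, y, hy, rfl⟩, by simp⟩

lemma comm_tmulSpan {A B : Type*} [Ring A] [Algebra F A] [Ring B] [Algebra F B]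
    (S : Set A) (T : Set B) :
    Submodule.map (Algebra.TensorProduct.comm F A B).toLinearMap (tmulSpan F S T)
      = tmulSpan F T S := by
  rw [tmulSpan, Submodule.map_span, tmulSpan]
  congr 1
  ext t
  constructor
  · rintro ⟨_, ⟨x, hx, y, hy, rfl⟩, rfl⟩
    exact ⟨y, hy, x, hx, by simp⟩
  · rintro ⟨y, hy, x, hx, rfl⟩
    exact ⟨x ⊗ₜ y, ⟨x, hx, y, hy, rfl⟩, by simp⟩

end Helpers

section Helpers2

variable {F : Type*} [Field F]

lemma not_mem_span_right {C B : Type*} [Ring C] [Algebra F C] [Ring B] [Algebra F B]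
    (IB : TwoSidedIdeal B) (hIBtop : IB ≠ ⊤) (S : Set C) {c : C} (hc : c ≠ 0) :
    c ⊗ₜ[F] (1 : B) ∉ tmulSpan F S (IB : Set B) := by
  intro hmem
  set MB := tsiSubmodule F IB with hMB
  have h1 : MB.mkQ 1 ≠ 0 := by
    rw [Submodule.mkQ_apply, ne_eq, Submodule.Quotient.mk_eq_zero]
    exact fun h => hIBtop (TwoSidedIdeal.eq_top IB (mem_tsiSubmodule.mp h))
  have hle : tmulSpan F S (IB : Set B) ≤ LinearMap.ker (LinearMap.lTensor C MB.mkQ) := by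
    rw [tmulSpan, Submodule.span_le]
    rintro _ ⟨x, hx, y, hy, rfl⟩
    simp only [SetLike.mem_coe, LinearMap.mem_ker, LinearMap.lTensor_tmul]
    have hz : (Submodule.Quotient.mk y : B ⧸ MB) = 0 :=
      (Submodule.Quotient.mk_eq_zero MB).mpr (mem_tsiSubmodule.mpr hy)
    rw [Submodule.mkQ_apply, hz, tmul_zero]
  have h2 := hle hmem
  rw [LinearMap.mem_ker, LinearMap.lTensor_tmul] at h2
  exact my_tmul_ne_zero hc h1 h2

lemma ker_rmap {A B A' : Type*} [Ring A] [Algebra F A] [Ring B] [Algebra F B]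
    [Ring A'] [Algebra F A']
    (IA : TwoSidedIdeal A) (qA : A →ₐ[F] A')
    (hsurj : Function.Surjective qA) (hker : ∀ x, qA x = 0 ↔ x ∈ IA) (z : A ⊗[F] B) :
    Algebra.TensorProduct.map qA (AlgHom.id F B) z = 0 ↔
      z ∈ tmulSpan F (IA : Set A) (Set.univ : Set B) := by
  set MA := tsiSubmodule F IA with hMA
  have hexact : Function.Exact MA.subtype qA.toLinearMap := by
    intro y
    simp only [AlgHom.toLinearMap_apply]
    rw [hker]
    constructor
    · intro hy; exact ⟨⟨y, mem_tsiSubmodule.mpr hy⟩, rfl⟩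
    · rintro ⟨⟨y', hy'⟩, rfl⟩; exact mem_tsiSubmodule.mp hy'
  have hmap : (Algebra.TensorProduct.map qA (AlgHom.id F B)).toLinearMap
      = LinearMap.rTensor B qA.toLinearMap := by
    apply TensorProduct.ext'
    intro x y
    simp
  have htex := rTensor_exact (f := MA.subtype) (g := qA.toLinearMap) B hexact hsurj
  constructor
  · intro hz
    have hz' : LinearMap.rTensor B qA.toLinearMap z = 0 := by
      rw [← hmap]; exact hz
    obtain ⟨t, rfl⟩ := (htex z).mp hz'
    clear hz hz'
    induction t using TensorProduct.induction_on with
    | zero => simpa using (tmulSpan F (IA : Set A) (Set.univ : Set B)).zero_mem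
    | tmul m y =>
      rw [LinearMap.rTensor_tmul]
      exact Submodule.subset_span ⟨m.1, mem_tsiSubmodule.mp m.2, y, trivial, rfl⟩
    | add u v hu hv =>
      rw [map_add]
      exact (tmulSpan F (IA : Set A) (Set.univ : Set B)).add_mem hu hv
  · intro hz
    have hle : tmulSpan F (IA : Set A) (Set.univ : Set B) ≤
        LinearMap.ker (Algebra.TensorProduct.map qA (AlgHom.id F B)).toLinearMap := by
      rw [tmulSpan, Submodule.span_le]
      rintro _ ⟨x, hx, y, -, rfl⟩
      simp only [SetLike.mem_coe, LinearMap.mem_ker, AlgHom.toLinearMap_apply,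
        Algebra.TensorProduct.map_tmul]
      rw [(hker x).mpr hx, zero_tmul]
    exact hle hz

lemma comap_equiv_eq_bot {R S : Type*} [Ring R] [Ring S] (e : R ≃+* S)
    {J : TwoSidedIdeal S} (h : TwoSidedIdeal.comap e J = ⊥) : J = ⊥ := by
  apply SetLike.ext
  intro x
  rw [TwoSidedIdeal.mem_bot]
  constructor
  · intro hx
    have : e.symm x ∈ TwoSidedIdeal.comap e J := by
      rw [TwoSidedIdeal.mem_comap, e.apply_symm_apply]; exact hx
    rw [h, TwoSidedIdeal.mem_bot] at this
    have := congrArg e this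
    simpa using this
  · rintro rfl; exact J.zero_mem

lemma comap_equiv_eq_top {R S : Type*} [Ring R] [Ring S] (e : R ≃+* S)
    {J : TwoSidedIdeal S} (h : TwoSidedIdeal.comap e J = ⊤) : J = ⊤ := by
  apply TwoSidedIdeal.eq_top
  have : (1 : R) ∈ TwoSidedIdeal.comap e J := h ▸ TwoSidedIdeal.mem_top _
  rw [TwoSidedIdeal.mem_comap, map_one] at this
  exact this

lemma comap_equiv_set {R S : Type*} [Ring R] [Algebra F R] [Ring S] [Algebra F S]
    (e : R ≃ₐ[F] S) {J : TwoSidedIdeal S} {M : Submodule F R}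
    (h : (TwoSidedIdeal.comap e J : Set R) = ↑M) :
    (J : Set S) = ↑(Submodule.map e.toLinearMap M) := by
  ext w
  rw [Submodule.map_coe]
  constructor
  · intro hw
    refine ⟨e.symm w, ?_, by simp⟩
    have : e.symm w ∈ TwoSidedIdeal.comap e J := by
      rw [TwoSidedIdeal.mem_comap, e.apply_symm_apply]; exact hw
    rw [← SetLike.mem_coe, h] at this
    exact this
  · rintro ⟨z, hz, rfl⟩
    have : z ∈ TwoSidedIdeal.comap e J := by
      rw [← SetLike.mem_coe, h]; exact hz
    rw [TwoSidedIdeal.mem_comap] at this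
    simpa using this

end Helpers2

lemma left_main (F A B A' : Type*) [Field F] [Ring A] [Algebra F A] [Ring B] [Algebra F B]
    [Ring A'] [Algebra F A']
    (IA : TwoSidedIdeal A) (IB : TwoSidedIdeal B)
    (hA : IsNearlySimpleWith IA) (hB : IsNearlySimpleWith IB)
    (hadm : ∀ J : TwoSidedIdeal (A ⊗[F] B), Admissible F IA IB J)
    (qA : A →ₐ[F] A') (hqAsurj : Function.Surjective qA)
    (hkerA : ∀ x : A, qA x = 0 ↔ x ∈ IA) :
    ∃ K : TwoSidedIdeal (A' ⊗[F] B),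
      (K : Set (A' ⊗[F] B)) = ↑(tmulSpan F (Set.univ : Set A') (IB : Set B)) ∧
      K ≠ ⊥ ∧ K ≠ ⊤ ∧
      (∀ J : TwoSidedIdeal (A' ⊗[F] B), J ≠ ⊥ → J ≠ ⊤ → J = K) ∧
      (∃ x ∈ K, ∃ y ∈ K, x * y ≠ 0) := by
  haveI : Nontrivial B := nontrivial_of_nearly hB
  have h1A' : (1 : A') ≠ 0 := by
    intro h
    exact hA.2.1 (TwoSidedIdeal.eq_top IA ((hkerA 1).mp (by rw [map_one, h])))
  have h1B : (1 : B) ≠ 0 := one_ne_zero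
  -- closure of the span under multiplication
  have hclosed_l : ∀ x z : A' ⊗[F] B, z ∈ tmulSpan F (Set.univ : Set A') (IB : Set B) →
      x * z ∈ tmulSpan F (Set.univ : Set A') (IB : Set B) := by
    intro x z hz
    induction hz using Submodule.span_induction with
    | mem g hg =>
      obtain ⟨c, -, y, hy, rfl⟩ := hg
      induction x using TensorProduct.induction_on with
      | zero => simpa using (tmulSpan F (Set.univ : Set A') (IB : Set B)).zero_mem
      | tmul a b =>
        rw [Algebra.TensorProduct.tmul_mul_tmul]
        exact Submodule.subset_span ⟨a * c, trivial, b * y, IB.mul_mem_left b y hy, rfl⟩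
      | add u v hu hv =>
        rw [add_mul]
        exact (tmulSpan F (Set.univ : Set A') (IB : Set B)).add_mem hu hv
    | zero => simpa using (tmulSpan F (Set.univ : Set A') (IB : Set B)).zero_mem
    | add u v hu hv ihu ihv =>
      rw [mul_add]
      exact (tmulSpan F (Set.univ : Set A') (IB : Set B)).add_mem ihu ihv
    | smul c u hu ih =>
      rw [mul_smul_comm]
      exact (tmulSpan F (Set.univ : Set A') (IB : Set B)).smul_mem c ih
  have hclosed_r : ∀ x z : A' ⊗[F] B, z ∈ tmulSpan F (Set.univ : Set A') (IB : Set B) →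
      z * x ∈ tmulSpan F (Set.univ : Set A') (IB : Set B) := by
    intro x z hz
    induction hz using Submodule.span_induction with
    | mem g hg =>
      obtain ⟨c, -, y, hy, rfl⟩ := hg
      induction x using TensorProduct.induction_on with
      | zero => simpa using (tmulSpan F (Set.univ : Set A') (IB : Set B)).zero_mem
      | tmul a b =>
        rw [Algebra.TensorProduct.tmul_mul_tmul]
        exact Submodule.subset_span ⟨c * a, trivial, y * b, IB.mul_mem_right y b hy, rfl⟩
      | add u v hu hv =>
        rw [mul_add]
        exact (tmulSpan F (Set.univ : Set A') (IB : Set B)).add_mem hu hv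
    | zero => simpa using (tmulSpan F (Set.univ : Set A') (IB : Set B)).zero_mem
    | add u v hu hv ihu ihv =>
      rw [add_mul]
      exact (tmulSpan F (Set.univ : Set A') (IB : Set B)).add_mem ihu ihv
    | smul c u hu ih =>
      rw [smul_mul_assoc]
      exact (tmulSpan F (Set.univ : Set A') (IB : Set B)).smul_mem c ih
  set KS : Submodule F (A' ⊗[F] B) := tmulSpan F (Set.univ : Set A') (IB : Set B) with hKSdef
  refine ⟨TwoSidedIdeal.mk' (KS : Set (A' ⊗[F] B)) KS.zero_mem (fun h1 h2 => KS.add_mem h1 h2)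
    (fun h => KS.neg_mem h) (fun h => hclosed_l _ _ h) (fun h => hclosed_r _ _ h), ?_, ?_, ?_, ?_, ?_⟩
  case _ => exact TwoSidedIdeal.coe_mk' _ _ _ _ _ _
  -- K ≠ ⊥
  case _ =>
    obtain ⟨y0, hy0, hy0ne⟩ := exists_mem_ne_zero hB.1
    intro hbot
    have hmem : (1 : A') ⊗ₜ[F] y0 ∈ tmulSpan F (Set.univ : Set A') (IB : Set B) :=
      Submodule.subset_span ⟨1, trivial, y0, hy0, rfl⟩
    have : (1 : A') ⊗ₜ[F] y0 ∈ (⊥ : TwoSidedIdeal (A' ⊗[F] B)) := by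
      rw [← hbot, TwoSidedIdeal.mem_mk']
      exact hmem
    rw [TwoSidedIdeal.mem_bot] at this
    exact my_tmul_ne_zero h1A' hy0ne this
  -- K ≠ ⊤
  case _ =>
    intro htop
    have h1 : (1 : A' ⊗[F] B) ∈ tmulSpan F (Set.univ : Set A') (IB : Set B) := by
      have : (1 : A' ⊗[F] B) ∈ (⊤ : TwoSidedIdeal (A' ⊗[F] B)) := TwoSidedIdeal.mem_top _
      rw [← htop, TwoSidedIdeal.mem_mk'] at this
      exact this
    rw [Algebra.TensorProduct.one_def] at h1
    exact not_mem_span_right IB hB.2.1 (Set.univ : Set A') h1A' h1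
  -- uniqueness
  case _ =>
    intro J hJbot hJtop
    set q := Algebra.TensorProduct.map qA (AlgHom.id F B) with hqdef
    have hqsurj : Function.Surjective q := by
      intro z
      induction z using TensorProduct.induction_on with
      | zero => exact ⟨0, map_zero q⟩
      | tmul a' b =>
        obtain ⟨a, rfl⟩ := hqAsurj a'
        exact ⟨a ⊗ₜ b, by simp [hqdef]⟩
      | add u v hu hv =>
        obtain ⟨x, rfl⟩ := hu
        obtain ⟨y, rfl⟩ := hv
        exact ⟨x + y, map_add q x y⟩
    set J0 := TwoSidedIdeal.comap q J with hJ0def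
    have hmemJ0 : ∀ z, z ∈ J0 ↔ q z ∈ J := fun z => TwoSidedIdeal.mem_comap q
    have hJim : (J : Set (A' ⊗[F] B)) = ⇑q '' (J0 : Set (A ⊗[F] B)) := by
      ext w
      constructor
      · intro hw
        obtain ⟨z, rfl⟩ := hqsurj w
        exact ⟨z, (hmemJ0 z).mpr hw, rfl⟩
      · rintro ⟨z, hz, rfl⟩
        exact (hmemJ0 z).mp hz
    obtain ⟨x0, hx0, hx0ne⟩ := exists_mem_ne_zero hA.1
    have hqx0 : q (x0 ⊗ₜ[F] (1 : B)) = 0 := by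
      have : qA x0 = 0 := (hkerA x0).mpr hx0
      simp [hqdef, this]
    have hx0J0 : x0 ⊗ₜ[F] (1 : B) ∈ J0 := (hmemJ0 _).mpr (by rw [hqx0]; exact J.zero_mem)
    rcases hadm J0 with hcase | hcase | hcase | hcase | hcase | hcase
    · -- J0 = ⊥ : impossible
      rw [hcase, TwoSidedIdeal.mem_bot] at hx0J0
      exact absurd hx0J0 (my_tmul_ne_zero hx0ne h1B)
    · -- J0 = ⊤ : then J = ⊤
      exfalso
      apply hJtop
      apply TwoSidedIdeal.eq_top
      have : (1 : A ⊗[F] B) ∈ J0 := hcase ▸ TwoSidedIdeal.mem_top _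
      rw [hmemJ0, map_one] at this
      exact this
    · -- J0 = IA ⊗ IB : impossible
      exfalso
      have : x0 ⊗ₜ[F] (1 : B) ∈ tmulSpan F (IA : Set A) (IB : Set B) := by
        rw [← SetLike.mem_coe, hcase] at hx0J0
        exact hx0J0
      exact not_mem_span_right IB hB.2.1 (IA : Set A) hx0ne this
    · -- J0 = IA ⊗ B : then J = ⊥
      exfalso
      apply hJbot
      have himg : Submodule.map q.toLinearMap (tmulSpan F (IA : Set A) (Set.univ : Set B)) = ⊥ := by
        rw [hqdef, map_tmulSpan, eq_bot_iff, tmulSpan, Submodule.span_le]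
        rintro _ ⟨_, ⟨x, hx, rfl⟩, y, -, rfl⟩
        have : qA x = 0 := (hkerA x).mpr hx
        simp [this]
      apply SetLike.ext'
      rw [hJim, hcase]
      have : ⇑q '' ↑(tmulSpan F (IA : Set A) (Set.univ : Set B))
          = ↑(Submodule.map q.toLinearMap (tmulSpan F (IA : Set A) (Set.univ : Set B))) := by
        rw [Submodule.map_coe]; rfl
      rw [this, himg]
      rfl
    · -- J0 = A ⊗ IB : impossible
      exfalso
      have : x0 ⊗ₜ[F] (1 : B) ∈ tmulSpan F (Set.univ : Set A) (IB : Set B) := by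
        rw [← SetLike.mem_coe, hcase] at hx0J0
        exact hx0J0
      exact not_mem_span_right IB hB.2.1 (Set.univ : Set A) hx0ne this
    · -- J0 = IA ⊗ B + A ⊗ IB : then J = K
      apply SetLike.ext'
      rw [hJim, hcase, TwoSidedIdeal.coe_mk']
      have h1 : ⇑q '' ↑(tmulSpan F (IA : Set A) (Set.univ : Set B) ⊔
            tmulSpan F (Set.univ : Set A) (IB : Set B))
          = ↑(Submodule.map q.toLinearMap (tmulSpan F (IA : Set A) (Set.univ : Set B) ⊔
            tmulSpan F (Set.univ : Set A) (IB : Set B))) := by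
        rw [Submodule.map_coe]; rfl
      rw [h1, Submodule.map_sup]
      have himg : Submodule.map q.toLinearMap (tmulSpan F (IA : Set A) (Set.univ : Set B)) = ⊥ := by
        rw [hqdef, map_tmulSpan, eq_bot_iff, tmulSpan, Submodule.span_le]
        rintro _ ⟨_, ⟨x, hx, rfl⟩, y, -, rfl⟩
        have : qA x = 0 := (hkerA x).mpr hx
        simp [this]
      have himg2 : Submodule.map q.toLinearMap (tmulSpan F (Set.univ : Set A) (IB : Set B))
          = tmulSpan F (Set.univ : Set A') (IB : Set B) := by
        rw [hqdef, map_tmulSpan]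
        congr 1
        · rw [Set.image_univ, Set.range_eq_univ.mpr hqAsurj]
        · simp
      rw [himg, himg2, bot_sup_eq]
  -- product nonzero
  case _ =>
    obtain ⟨u, hu, v, hv, huv⟩ := hB.2.2.2
    refine ⟨(1 : A') ⊗ₜ[F] u, ?_, (1 : A') ⊗ₜ[F] v, ?_, ?_⟩
    · rw [TwoSidedIdeal.mem_mk']
      exact Submodule.subset_span ⟨1, trivial, u, hu, rfl⟩
    · rw [TwoSidedIdeal.mem_mk']
      exact Submodule.subset_span ⟨1, trivial, v, hv, rfl⟩
    · rw [Algebra.TensorProduct.tmul_mul_tmul, one_mul]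
      exact my_tmul_ne_zero h1A' huv

/-- If `A` and `B` are nearly simple and every two-sided ideal of `A ⊗ B` is admissible,
then `(A/I_A) ⊗ B` is nearly simple with unique non-trivial ideal `(A/I_A) ⊗ I_B`, and
symmetrically `A ⊗ (B/I_B)` is nearly simple with unique non-trivial ideal
`I_A ⊗ (B/I_B)`.  (The quotients are presented abstractly by surjective algebra
homomorphisms `qA : A → A'`, `qB : B → B'` with kernels `I_A`, `I_B`.) -/
theorem quotient_tensor_nearly_simple_of_all_ideals_admissible
    (F A B A' B' : Type*) [Field F] [Ring A] [Algebra F A] [Ring B] [Algebra F B]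
    [Ring A'] [Algebra F A'] [Ring B'] [Algebra F B']
    (IA : TwoSidedIdeal A) (IB : TwoSidedIdeal B)
    (hA : IsNearlySimpleWith IA) (hB : IsNearlySimpleWith IB)
    (hadm : ∀ J : TwoSidedIdeal (A ⊗[F] B), Admissible F IA IB J)
    (qA : A →ₐ[F] A') (hqAsurj : Function.Surjective qA)
    (hkerA : ∀ x : A, qA x = 0 ↔ x ∈ IA)
    (qB : B →ₐ[F] B') (hqBsurj : Function.Surjective qB)
    (hkerB : ∀ y : B, qB y = 0 ↔ y ∈ IB) :
    (∃ K : TwoSidedIdeal (A' ⊗[F] B),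
      (K : Set (A' ⊗[F] B)) = ↑(tmulSpan F (Set.univ : Set A') (IB : Set B)) ∧
      K ≠ ⊥ ∧ K ≠ ⊤ ∧
      (∀ J : TwoSidedIdeal (A' ⊗[F] B), J ≠ ⊥ → J ≠ ⊤ → J = K) ∧
      (∃ x ∈ K, ∃ y ∈ K, x * y ≠ 0)) ∧
    (∃ K : TwoSidedIdeal (A ⊗[F] B'),
      (K : Set (A ⊗[F] B')) = ↑(tmulSpan F (IA : Set A) (Set.univ : Set B')) ∧
      K ≠ ⊥ ∧ K ≠ ⊤ ∧
      (∀ J : TwoSidedIdeal (A ⊗[F] B'), J ≠ ⊥ → J ≠ ⊤ → J = K) ∧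
      (∃ x ∈ K, ∃ y ∈ K, x * y ≠ 0)) := by
  constructor
  · exact left_main F A B A' IA IB hA hB hadm qA hqAsurj hkerA
  · -- transport through the commutativity isomorphism
    set e1 := Algebra.TensorProduct.comm F A B with he1
    have hadm' : ∀ J : TwoSidedIdeal (B ⊗[F] A), Admissible F IB IA J := by
      intro J
      rcases hadm (TwoSidedIdeal.comap e1 J) with h | h | h | h | h | h
      · exact Or.inl (comap_equiv_eq_bot (e1 : A ⊗[F] B ≃+* B ⊗[F] A) h)
      · exact Or.inr (Or.inl (comap_equiv_eq_top (e1 : A ⊗[F] B ≃+* B ⊗[F] A) h))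
      · refine Or.inr (Or.inr (Or.inl ?_))
        rw [comap_equiv_set e1 h, comm_tmulSpan]
      · refine Or.inr (Or.inr (Or.inr (Or.inr (Or.inl ?_))))
        rw [comap_equiv_set e1 h, comm_tmulSpan]
      · refine Or.inr (Or.inr (Or.inr (Or.inl ?_)))
        rw [comap_equiv_set e1 h, comm_tmulSpan]
      · refine Or.inr (Or.inr (Or.inr (Or.inr (Or.inr ?_))))
        rw [comap_equiv_set e1 h, Submodule.map_sup, comm_tmulSpan, comm_tmulSpan, sup_comm]
    obtain ⟨K1, hK1set, hK1bot, hK1top, hK1uniq, u1, hu1, v1, hv1, huv1⟩ :=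
      left_main F B A B' IB IA hB hA hadm' qB hqBsurj hkerB
    set e3 := Algebra.TensorProduct.comm F A B' with he3
    refine ⟨TwoSidedIdeal.comap e3 K1, ?_, ?_, ?_, ?_, ?_⟩
    · -- the set computation
      have key : ∀ w : A ⊗[F] B', e3 w ∈ tmulSpan F (Set.univ : Set B') (IA : Set A) ↔
          w ∈ tmulSpan F (IA : Set A) (Set.univ : Set B') := by
        intro w
        rw [← comm_tmulSpan (F := F) (IA : Set A) (Set.univ : Set B')]
        constructor
        · rintro ⟨w', hw', heq⟩
          have hww : w' = w := e3.injective (by simpa [he3] using heq)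
          rwa [← hww]
        · intro h
          exact ⟨w, h, by simp [he3]⟩
      ext w
      rw [SetLike.mem_coe, TwoSidedIdeal.mem_comap, SetLike.mem_coe]
      rw [← key w, ← SetLike.mem_coe, hK1set, SetLike.mem_coe]
    · intro h
      exact hK1bot (comap_equiv_eq_bot (e3 : A ⊗[F] B' ≃+* B' ⊗[F] A) h)
    · intro h
      exact hK1top (comap_equiv_eq_top (e3 : A ⊗[F] B' ≃+* B' ⊗[F] A) h)
    · intro J hJbot hJtop
      have hcomp : TwoSidedIdeal.comap e3 (TwoSidedIdeal.comap e3.symm J) = J := by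
        apply SetLike.ext
        intro x
        rw [TwoSidedIdeal.mem_comap, TwoSidedIdeal.mem_comap, e3.symm_apply_apply]
      have hb : TwoSidedIdeal.comap e3.symm J ≠ ⊥ := by
        intro h
        exact hJbot (comap_equiv_eq_bot (e3.symm : B' ⊗[F] A ≃+* A ⊗[F] B') h)
      have ht : TwoSidedIdeal.comap e3.symm J ≠ ⊤ := by
        intro h
        exact hJtop (comap_equiv_eq_top (e3.symm : B' ⊗[F] A ≃+* A ⊗[F] B') h)
      rw [← hcomp, hK1uniq (TwoSidedIdeal.comap e3.symm J) hb ht]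
    · refine ⟨e3.symm u1, ?_, e3.symm v1, ?_, ?_⟩
      · rw [TwoSidedIdeal.mem_comap, e3.apply_symm_apply]; exact hu1
      · rw [TwoSidedIdeal.mem_comap, e3.apply_symm_apply]; exact hv1
      · intro h
        apply huv1
        have h2 : e3.symm (u1 * v1) = 0 := by rw [map_mul]; exact h
        have := congrArg e3 h2
        simpa using this
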